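/- Theorem (Bound of exponent, paper Theorem 6.4, in the form established by its proof). In the situation of the context: (1) for every n ≥ 0, the torsion submodule of gr_n M is killed by n! (equivalently, by p^{v_p(n!)}); (2) gr_n M = 0 for every n ≥ r_d + 1; consequently the torsion submodule of every graded piece gr_n M is killed by r_d!. -/

import Mathlib

/-!
Statement 6 (paper Theorem 6.4, "Bound of exponent").

Context as in Statement 4: `R` a char-0 DVR with maximal ideal `(p)`, `M` finite free
of rank `d` with an increasing filtration `Fil` (zero in negative degrees, all of `M`
in degrees `≥ r_d`) and operator `θ` stabilizing the filtration, satisfying the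
"Griffiths transversality" `(θ - n)(Fil_n) ⊆ Fil_{n-1}`, and diagonalizable over the
fraction field with characteristic polynomial `∏ (X - r_i)`.

Conclusions: (1) the torsion submodule of `gr_n M` is killed by `n!`;
(2) `gr_n M = 0` for `n ≥ r_d + 1`; consequently the torsion submodule of every
graded piece is killed by `r_d!`.
-/

open Submodule

noncomputable section

namespace FilSen

variable {R : Type*} [CommRing R] {M : Type*} [AddCommGroup M] [Module R M]

/-- `gr_n M = Fil_n M / Fil_{n-1} M`. -/
abbrev grQ (Fil : ℤ → Submodule R M) (n : ℤ) :=
  ↥(Fil n) ⧸ Submodule.comap (Fil n).subtype (Fil (n - 1))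

end FilSen

open FilSen

namespace BoundAux

variable {R : Type*} [CommRing R] {M : Type*} [AddCommGroup M] [Module R M]

/-- The operator `θ - j`. -/
def Eop (θ : Module.End R M) (j : ℤ) : Module.End R M := θ - (j : R) • 1

lemma Eop_apply (θ : Module.End R M) (j : ℤ) (x : M) :
    Eop θ j x = θ x - (j : R) • x := by
  simp [Eop]

lemma Eop_comm (θ : Module.End R M) (i j : ℤ) :
    Eop θ i * Eop θ j = Eop θ j * Eop θ i := by
  simp only [Eop, sub_mul, mul_sub, smul_mul_assoc, mul_smul_comm, one_mul, mul_one,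
    smul_sub, smul_smul]
  rw [mul_comm (i : R) (j : R)]
  abel

/-- `Hop θ k = (θ - 0) * (θ - 1) * ⋯ * (θ - (k-1))`, with `θ - (k-1)` rightmost. -/
def Hop (θ : Module.End R M) : ℕ → Module.End R M
  | 0 => 1
  | k + 1 => Hop θ k * Eop θ (k : ℤ)

lemma Eop_comm_Hop (θ : Module.End R M) (j : ℤ) (k : ℕ) :
    Eop θ j * Hop θ k = Hop θ k * Eop θ j := by
  induction k with
  | zero => simp [Hop]
  | succ k ih =>
      simp only [Hop]
      rw [← mul_assoc, ih, mul_assoc, Eop_comm, ← mul_assoc]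

lemma prod_range_sub_eq_factorial (n : ℕ) :
    (∏ j ∈ Finset.range n, (n - j)) = n.factorial := by
  induction n with
  | zero => simp
  | succ n ih =>
      rw [Finset.prod_range_succ']
      simp only [Nat.succ_sub_succ, Nat.sub_zero]
      rw [ih, Nat.factorial_succ, mul_comm]

end BoundAux

open BoundAux

theorem bound_of_exponent
    {R : Type*} [CommRing R] [IsDomain R] [IsDiscreteValuationRing R] [CharZero R]
    (p : ℕ) [Fact p.Prime] (hp : Irreducible (p : R))
    {M : Type*} [AddCommGroup M] [Module R M] [Module.Free R M] [Module.Finite R M]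
    (d : ℕ) (hd : 0 < d) (hrank : Module.finrank R M = d)
    (r : Fin d → ℕ) (hr : Monotone r)
    (Fil : ℤ → Submodule R M) (hmono : Monotone Fil)
    (hbot : ∀ n : ℤ, n < 0 → Fil n = ⊥)
    (htop : ∀ n : ℤ, ((Finset.univ.sup r : ℕ) : ℤ) ≤ n → Fil n = ⊤)
    (θ : M →ₗ[R] M)
    (hstab : ∀ n : ℤ, ∀ x ∈ Fil n, θ x ∈ Fil n)
    (hGT : ∀ n : ℤ, ∀ x ∈ Fil n, θ x - (n : R) • x ∈ Fil (n - 1))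
    (hchar : LinearMap.charpoly θ = ∏ i : Fin d, (Polynomial.X - Polynomial.C ((r i : R))))
    (hdiag : Polynomial.aeval θ (∏ v ∈ Finset.image r Finset.univ,
        (Polynomial.X - Polynomial.C ((v : R)))) = 0) :
    -- (1) the torsion submodule of `gr_n M` is killed by `n!`
    (∀ n : ℕ, ∀ x ∈ Submodule.torsion R (grQ Fil (n : ℤ)),
      ((Nat.factorial n : R)) • x = 0) ∧
    -- (2) `gr_n M = 0` for every `n ≥ r_d + 1` ...
    (∀ n : ℤ, ((Finset.univ.sup r : ℕ) : ℤ) + 1 ≤ n → ∀ x : grQ Fil n, x = 0) ∧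
    -- ... consequently the torsion of every graded piece is killed by `r_d!`
    (∀ n : ℤ, ∀ x ∈ Submodule.torsion R (grQ Fil n),
      ((Nat.factorial (Finset.univ.sup r) : R)) • x = 0) := by
  classical
  -- E stabilizes the filtration
  have hEstab : ∀ (j m : ℤ), ∀ v ∈ Fil m, Eop θ j v ∈ Fil m := by
    intro j m v hv
    rw [Eop_apply]
    exact sub_mem (hstab m v hv) (Submodule.smul_mem _ _ hv)
  have hHstab : ∀ (k : ℕ) (m : ℤ), ∀ v ∈ Fil m, Hop θ k v ∈ Fil m := by
    intro k
    induction k with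
    | zero => intro m v hv; simpa [Hop] using hv
    | succ k ih =>
        intro m v hv
        simp only [Hop, Module.End.mul_apply]
        exact ih m _ (hEstab _ m v hv)
  -- the product of `θ - j`, `0 ≤ j ≤ k-1`, kills `Fil (k-1)`
  have hHzero : ∀ (k : ℕ), ∀ v ∈ Fil ((k : ℤ) - 1), Hop θ k v = 0 := by
    intro k
    induction k with
    | zero =>
        intro v hv
        rw [show ((0 : ℕ) : ℤ) - 1 = -1 by simp, hbot (-1) (by norm_num)] at hv
        simpa [Hop] using hv
    | succ k ih =>
        intro v hv
        have hv' : v ∈ Fil (k : ℤ) := by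
          have : ((k + 1 : ℕ) : ℤ) - 1 = (k : ℤ) := by push_cast; ring
          rwa [this] at hv
        simp only [Hop, Module.End.mul_apply]
        apply ih
        rw [Eop_apply]
        exact hGT (k : ℤ) v hv'
  -- an eigenvector for eigenvalue `N` lying in `Fil (k-1)` with `k ≤ N` is zero
  have hkill : ∀ (N : ℤ) (k : ℕ), (k : ℤ) ≤ N → ∀ v : M, θ v = (N : R) • v →
      v ∈ Fil ((k : ℤ) - 1) → v = 0 := by
    intro N k
    induction k with
    | zero =>
        intro _ v _ hv
        rw [show ((0 : ℕ) : ℤ) - 1 = -1 by simp, hbot (-1) (by norm_num)] at hv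
        simpa using hv
    | succ k ih =>
        intro hkN v hθv hv
        have hk : (k : ℤ) < N := by push_cast at hkN; omega
        have hv' : v ∈ Fil (k : ℤ) := by
          have : ((k + 1 : ℕ) : ℤ) - 1 = (k : ℤ) := by push_cast; ring
          rwa [this] at hv
        have h2 : ((N - k : ℤ) : R) • v ∈ Fil ((k : ℤ) - 1) := by
          have he : ((N - k : ℤ) : R) • v = θ v - ((k : ℤ) : R) • v := by
            rw [hθv]; push_cast; rw [sub_smul]
          rw [he]
          exact hGT (k : ℤ) v hv'
        have h3 : θ (((N - k : ℤ) : R) • v) = (N : R) • (((N - k : ℤ) : R) • v) := by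
          rw [map_smul, hθv, smul_comm]
        have h4 := ih (le_of_lt hk) _ h3 h2
        have hne : ((N - k : ℤ) : R) ≠ 0 := by
          rw [Int.cast_ne_zero]; omega
        exact (smul_eq_zero.mp h4).resolve_left hne
  -- congruence : `Hop θ k x ≡ (n(n-1)⋯(n-k+1)) • x` modulo `Fil (n-1)` for `x ∈ Fil n`
  have hcong : ∀ (n : ℕ) (x : M), x ∈ Fil (n : ℤ) → ∀ k : ℕ, k ≤ n →
      ∃ w ∈ Fil ((n : ℤ) - 1),
        Hop θ k x = ((∏ j ∈ Finset.range k, (n - j) : ℕ) : R) • x + w := by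
    intro n x hx k
    induction k with
    | zero => intro _; exact ⟨0, Submodule.zero_mem _, by simp [Hop]⟩
    | succ k ih =>
        intro hk
        have hkn : k < n := hk
        obtain ⟨w, hw, hHk⟩ := ih (le_of_lt hkn)
        have hw0 : θ x - ((n : ℕ) : R) • x ∈ Fil ((n : ℤ) - 1) := by
          have := hGT (n : ℤ) x hx
          simpa using this
        have hEx : Eop θ (k : ℤ) x =
            (θ x - ((n : ℕ) : R) • x) + (((n : ℕ) : R) - ((k : ℕ) : R)) • x := by
          rw [Eop_apply, sub_smul]
          push_cast
          abel
        refine ⟨Hop θ k (θ x - ((n : ℕ) : R) • x) + (((n : ℕ) : R) - ((k : ℕ) : R)) • w,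
          add_mem (hHstab k _ _ hw0) (Submodule.smul_mem _ _ hw), ?_⟩
        have hstep : Hop θ (k + 1) x = Hop θ k (Eop θ (k : ℤ) x) := by
          simp [Hop, Module.End.mul_apply]
        rw [hstep, hEx, map_add, map_smul, hHk, Finset.prod_range_succ]
        rw [smul_add, smul_smul]
        have hc : (((n : ℕ) : R) - ((k : ℕ) : R)) * ((∏ j ∈ Finset.range k, (n - j) : ℕ) : R)
            = ((∏ j ∈ Finset.range k, (n - j) : ℕ) * (n - k) : ℕ) := by
          push_cast [Nat.cast_sub (le_of_lt hkn)]
          ring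
        rw [hc]
        abel
  -- main statement for a single `n`
  have main1 : ∀ (n : ℕ) (x : M), x ∈ Fil (n : ℤ) →
      (∃ a : R, a ∈ nonZeroDivisors R ∧ a • x ∈ Fil ((n : ℤ) - 1)) →
      (n.factorial : R) • x ∈ Fil ((n : ℤ) - 1) := by
    intro n x hx ⟨a, ha, hax⟩
    obtain ⟨w, hw, hHn⟩ := hcong n x hx n le_rfl
    rw [prod_range_sub_eq_factorial n] at hHn
    set z := Hop θ n x with hz
    have hEz : Eop θ (n : ℤ) z = 0 := by
      have hco : Eop θ (n : ℤ) (Hop θ n x) = Hop θ n (Eop θ (n : ℤ) x) := by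
        rw [← Module.End.mul_apply, Eop_comm_Hop, Module.End.mul_apply]
      rw [hz, hco]
      apply hHzero n
      rw [Eop_apply]
      exact hGT (n : ℤ) x hx
    have hθz : θ z = ((n : ℕ) : R) • z := by
      rw [Eop_apply] at hEz
      have := sub_eq_zero.mp hEz
      rw [this]
      norm_cast
    have haz : a • z ∈ Fil ((n : ℤ) - 1) := by
      rw [hHn, smul_add, smul_comm a ((n.factorial : R))]
      exact add_mem (Submodule.smul_mem _ _ hax) (Submodule.smul_mem _ _ hw)
    have hz0 : a • z = 0 := by
      apply hkill (n : ℤ) n le_rfl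
      · rw [map_smul, hθz, smul_comm a]
        norm_cast
      · exact haz
    have hzz : z = 0 := by
      have hane : a ≠ 0 := mem_nonZeroDivisors_iff_ne_zero.mp ha
      exact (smul_eq_zero.mp hz0).resolve_left hane
    rw [hzz] at hHn
    have hfx : (n.factorial : R) • x = -w := eq_neg_of_add_eq_zero_left hHn.symm
    rw [hfx]
    exact neg_mem hw
  -- assemble the three statements
  have part1 : ∀ n : ℕ, ∀ x ∈ Submodule.torsion R (grQ Fil (n : ℤ)),
      ((Nat.factorial n : R)) • x = 0 := by
    intro n x hx
    obtain ⟨x', rfl⟩ := Submodule.Quotient.mk_surjective _ x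
    obtain ⟨a, ha⟩ := (Submodule.mem_torsion_iff _).mp hx
    have hax : (a : R) • (x' : M) ∈ Fil ((n : ℤ) - 1) := by
      have h1 := ha
      rw [Submonoid.smul_def, ← Submodule.Quotient.mk_smul, Submodule.Quotient.mk_eq_zero,
        Submodule.mem_comap] at h1
      simpa using h1
    have hmem := main1 n (x' : M) x'.2 ⟨(a : R), a.2, hax⟩
    rw [← Submodule.Quotient.mk_smul, Submodule.Quotient.mk_eq_zero, Submodule.mem_comap]
    simpa using hmem
  have part2 : ∀ n : ℤ, ((Finset.univ.sup r : ℕ) : ℤ) + 1 ≤ n → ∀ x : grQ Fil n, x = 0 := by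
    intro n hn x
    obtain ⟨x', rfl⟩ := Submodule.Quotient.mk_surjective _ x
    rw [Submodule.Quotient.mk_eq_zero, Submodule.mem_comap, htop (n - 1) (by omega)]
    trivial
  refine ⟨part1, part2, ?_⟩
  intro n x hx
  by_cases h1 : n < 0
  · obtain ⟨x', hxx⟩ := Submodule.Quotient.mk_surjective _ x
    have hx'0 : (x' : M) ∈ Fil (n - 1) := by
      have h2 : (x' : M) ∈ Fil n := x'.2
      have h3 : (x' : M) = 0 := by
        have hle : Fil n ≤ ⊥ := le_of_eq (hbot n h1)
        simpa using hle h2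
      rw [h3]; exact Submodule.zero_mem _
    have hx0 : x = 0 := by
      rw [← hxx, Submodule.Quotient.mk_eq_zero, Submodule.mem_comap]
      exact hx'0
    rw [hx0, smul_zero]
  · by_cases h2 : ((Finset.univ.sup r : ℕ) : ℤ) + 1 ≤ n
    · rw [part2 n h2 x, smul_zero]
    · obtain ⟨m, rfl⟩ : ∃ m : ℕ, n = (m : ℤ) :=
        ⟨n.toNat, (Int.toNat_of_nonneg (by omega)).symm⟩
      have hms : m ≤ Finset.univ.sup r := by omega
      obtain ⟨c, hc⟩ := Nat.factorial_dvd_factorial hms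
      have h3 := part1 m x hx
      rw [hc]
      push_cast
      rw [mul_comm, mul_smul, h3, smul_zero]
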